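/- Let c ∈ (0, 1), let x* > 0 be the unique solution of ln(x* + c) = x*/(x* + c), and define h_c : [0, ∞) → ℝ by h_c(x) = x/(2·ln 2·(x* + c)) for 0 ≤ x ≤ x* and h_c(x) = (1/2)·log₂(x + c) for x ≥ x*. Then h_c is the upper concave envelope of f⁺(x) = max(0, (1/2)·log₂(x + c)) on [0, ∞): h_c is concave on [0, ∞), h_c(x) ≥ f⁺(x) for all x ≥ 0 (with equality for x ≥ x*), and any concave function φ on [0, ∞) with φ(x) ≥ f⁺(x) for all x ≥ 0 satisfies φ(x) ≥ h_c(x) for all x ≥ 0. -/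

import Mathlib

open Real

/-- For `c ∈ (0,1)` and `x* > 0` the unique solution of `ln (x* + c) = x*/(x* + c)`,
the function `h_c` (linear `x/(2 ln 2 (x*+c))` on `[0, x*]`, equal to `(1/2) log₂ (x+c)`
on `[x*, ∞)`) is the upper concave envelope of `f⁺ x = max 0 ((1/2) log₂ (x + c))` on
`[0, ∞)`: it is concave, majorizes `f⁺` (with equality for `x ≥ x*`), and is below any
concave majorant of `f⁺` on `[0, ∞)`. -/
theorem stmt_3 (c : ℝ) (hc0 : 0 < c) (hc1 : c < 1)
    (xs : ℝ) (hxs : 0 < xs) (heq : Real.log (xs + c) = xs / (xs + c))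
    (h : ℝ → ℝ)
    (hlin : ∀ x : ℝ, 0 ≤ x → x ≤ xs → h x = x / (2 * Real.log 2 * (xs + c)))
    (hlog : ∀ x : ℝ, xs ≤ x → h x = (1 / 2) * Real.logb 2 (x + c)) :
    ConcaveOn ℝ (Set.Ici 0) h ∧
    (∀ x : ℝ, 0 ≤ x → max 0 ((1 / 2) * Real.logb 2 (x + c)) ≤ h x) ∧
    (∀ x : ℝ, xs ≤ x → h x = max 0 ((1 / 2) * Real.logb 2 (x + c))) ∧
    (∀ φ : ℝ → ℝ, ConcaveOn ℝ (Set.Ici 0) φ →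
      (∀ x : ℝ, 0 ≤ x → max 0 ((1 / 2) * Real.logb 2 (x + c)) ≤ φ x) →
      ∀ x : ℝ, 0 ≤ x → h x ≤ φ x) := by
  have hL2 : (0:ℝ) < Real.log 2 := Real.log_pos (by norm_num)
  have hS : (0:ℝ) < xs + c := by linarith
  -- tangent inequality for log
  have klog : ∀ u v : ℝ, 0 < u → 0 < v → Real.log u ≤ Real.log v + (u - v) / v := by
    intro u v hu hv
    have h1 := Real.log_le_sub_one_of_pos (show (0:ℝ) < u / v by positivity)
    rw [Real.log_div hu.ne' hv.ne'] at h1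
    have h2 : u / v - 1 = (u - v) / v := by field_simp
    linarith [h2 ▸ h1]
  -- log (x + c) ≤ x / (xs + c) for x ≥ 0
  have glex : ∀ x : ℝ, 0 ≤ x → Real.log (x + c) ≤ x / (xs + c) := by
    intro x hx
    have h1 := klog (x + c) (xs + c) (by linarith) hS
    have h2 : Real.log (xs + c) + (x + c - (xs + c)) / (xs + c) = x / (xs + c) := by
      rw [heq]; field_simp; ring
    linarith
  -- h value at points ≥ xs, unfolded
  have hlog' : ∀ x : ℝ, xs ≤ x → h x = Real.log (x + c) / (2 * Real.log 2) := by
    intro x hx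
    rw [hlog x hx, Real.logb]
    ring
  -- h is below the line x ↦ x / (2 log2 (xs+c)) everywhere on [0,∞)
  have hline : ∀ x : ℝ, 0 ≤ x → h x ≤ x / (2 * Real.log 2 * (xs + c)) := by
    intro x hx
    rcases le_or_gt x xs with hx' | hx'
    · rw [hlin x hx hx']
    · rw [hlog' x hx'.le]
      have h1 := glex x hx
      rw [le_div_iff₀ hS] at h1
      rw [div_le_div_iff₀ (by positivity) (by positivity)]
      nlinarith [h1, hL2]
  -- nonnegativity of h on [xs, ∞)
  have hpos : ∀ x : ℝ, xs ≤ x → 0 ≤ Real.log (x + c) := by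
    intro x hx
    have h1 : Real.log (xs + c) ≤ Real.log (x + c) :=
      Real.log_le_log hS (by linarith)
    have h2 : 0 ≤ xs / (xs + c) := by positivity
    linarith [heq ▸ h2]
  -- value at xs
  have hxsval : h xs = xs / (2 * Real.log 2 * (xs + c)) := hlin xs hxs.le le_rfl
  -- supporting line at z ≥ xs: h x ≤ log(z+c)/(2 log2) + (x - z)/(2 log2 (z+c))
  have hsup : ∀ z : ℝ, xs ≤ z → ∀ x : ℝ, 0 ≤ x →
      h x ≤ Real.log (z + c) / (2 * Real.log 2) + (x - z) / (2 * Real.log 2 * (z + c)) := by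
    intro z hz x hx
    have hzc : (0:ℝ) < z + c := by linarith
    rcases le_or_gt xs x with hx' | hx'
    · rw [hlog' x hx']
      have h1 := klog (x + c) (z + c) (by linarith) hzc
      have h2 : (x + c - (z + c)) / (z + c) = (x - z) / (z + c) := by ring_nf
      rw [h2] at h1
      have h3 : Real.log (x + c) / (2 * Real.log 2) ≤
          (Real.log (z + c) + (x - z) / (z + c)) / (2 * Real.log 2) := by
        apply div_le_div_of_nonneg_right h1 (by positivity) |>.trans_eq rfl
      calc Real.log (x + c) / (2 * Real.log 2)
          ≤ (Real.log (z + c) + (x - z) / (z + c)) / (2 * Real.log 2) := h3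
        _ = Real.log (z + c) / (2 * Real.log 2) + (x - z) / (2 * Real.log 2 * (z + c)) := by
            field_simp
    · rw [hlin x hx hx'.le]
      -- need: x/(2 log2 (xs+c)) ≤ log(z+c)/(2 log2) + (x-z)/(2 log2 (z+c))
      -- use tangent at z applied at xs: log(xs+c) ≤ log(z+c) + (xs-z)/(z+c)
      have h1 := klog (xs + c) (z + c) hS hzc
      -- log(xs+c) = xs/(xs+c)
      rw [heq] at h1
      -- multiply out: goal after clearing denominators
      rw [div_add_div _ _ (by positivity) (by positivity), div_le_div_iff₀ (by positivity) (by positivity)]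
      have h2 : (xs + c - (z + c)) / (z + c) = (xs - z) / (z + c) := by ring_nf
      rw [h2] at h1
      have h1' : xs / (xs + c) - (xs - z) / (z + c) ≤ Real.log (z + c) := by linarith
      have key : xs * (z + c) - (xs - z) * (xs + c) ≤ Real.log (z + c) * ((xs + c) * (z + c)) := by
        have := mul_le_mul_of_nonneg_right h1' (show (0:ℝ) ≤ (xs + c) * (z + c) by positivity)
        calc xs * (z + c) - (xs - z) * (xs + c)
            = (xs / (xs + c) - (xs - z) / (z + c)) * ((xs + c) * (z + c)) := by
              field_simp
          _ ≤ Real.log (z + c) * ((xs + c) * (z + c)) := this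
      have step : x * (z + c) ≤ (Real.log (z + c) * (z + c) + (x - z)) * (xs + c) := by
        nlinarith [key, mul_nonneg (sub_nonneg.2 hx'.le) (sub_nonneg.2 hz)]
      nlinarith [mul_le_mul_of_nonneg_left step
        (show (0:ℝ) ≤ 4 * Real.log 2 ^ 2 by positivity)]
  -- supporting line value at z equals h z
  have hsupeq : ∀ z : ℝ, xs ≤ z →
      h z = Real.log (z + c) / (2 * Real.log 2) + (z - z) / (2 * Real.log 2 * (z + c)) := by
    intro z hz
    rw [hlog' z hz]
    simp
  -- CONCAVITY
  have hconc : ConcaveOn ℝ (Set.Ici 0) h := by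
    refine ⟨convex_Ici 0, ?_⟩
    intro p hp q hq a b ha hb hab
    simp only [smul_eq_mul]
    have hp' : (0:ℝ) ≤ p := hp
    have hq' : (0:ℝ) ≤ q := hq
    have hz0 : (0:ℝ) ≤ a * p + b * q := by positivity
    rcases le_or_gt (a * p + b * q) xs with hz | hz
    · rw [hlin _ hz0 hz]
      have h1 := hline p hp'
      have h2 := hline q hq'
      have e : (a * p + b * q) / (2 * Real.log 2 * (xs + c))
          = a * (p / (2 * Real.log 2 * (xs + c))) + b * (q / (2 * Real.log 2 * (xs + c))) := by
        rw [add_div, mul_div_assoc, mul_div_assoc]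
      rw [e]
      have := add_le_add (mul_le_mul_of_nonneg_left h1 ha) (mul_le_mul_of_nonneg_left h2 hb)
      linarith
    · obtain ⟨Z, hZ⟩ : ∃ Z : ℝ, Z = a * p + b * q := ⟨_, rfl⟩
      have hz' : xs ≤ Z := by rw [hZ]; exact hz.le
      have h1 := hsup Z hz' p hp'
      have h2 := hsup Z hz' q hq'
      have hb' : b = 1 - a := by linarith
      have e : Real.log (Z + c) / (2 * Real.log 2) + (Z - Z) / (2 * Real.log 2 * (Z + c))
          = a * (Real.log (Z + c) / (2 * Real.log 2) + (p - Z) / (2 * Real.log 2 * (Z + c)))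
          + b * (Real.log (Z + c) / (2 * Real.log 2) + (q - Z) / (2 * Real.log 2 * (Z + c))) := by
        rw [hb'] at hZ ⊢
        rw [hZ]
        ring
      rw [show a * p + b * q = Z from hZ.symm, hsupeq Z hz', e]
      have := add_le_add (mul_le_mul_of_nonneg_left h1 ha) (mul_le_mul_of_nonneg_left h2 hb)
      linarith
  refine ⟨hconc, ?_, ?_, ?_⟩
  -- MAJORIZATION
  · intro x hx
    rcases le_or_gt x xs with hx' | hx'
    · rw [hlin x hx hx', max_le_iff]
      constructor
      · positivity
      · have h1 := glex x hx
        rw [le_div_iff₀ hS] at h1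
        rw [Real.logb,
          show (1:ℝ)/2 * (Real.log (x + c) / Real.log 2) = Real.log (x + c) / (2 * Real.log 2) by
            ring]
        rw [div_le_div_iff₀ (by positivity) (by positivity)]
        nlinarith [h1, hL2]
    · rw [hlog x hx'.le]
      have h0 : 0 ≤ (1:ℝ)/2 * Real.logb 2 (x + c) := by
        have := hpos x hx'.le
        rw [Real.logb]
        positivity
      exact max_le h0 le_rfl
  -- EQUALITY ON [xs, ∞)
  · intro x hx
    rw [hlog x hx]
    have h0 : 0 ≤ (1:ℝ)/2 * Real.logb 2 (x + c) := by
      have := hpos x hx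
      rw [Real.logb]
      positivity
    rw [max_eq_right h0]
  -- MINIMALITY
  · intro φ hφ hmaj x hx
    rcases le_or_gt xs x with hx' | hx'
    · rw [hlog x hx']
      exact le_trans (le_max_right _ _) (hmaj x hx)
    · -- x < xs : interpolate between 0 and xs
      have hb : (0:ℝ) ≤ x / xs := by positivity
      have ha : (0:ℝ) ≤ 1 - x / xs := by
        rw [sub_nonneg, div_le_one hxs]; exact hx'.le
      have hab : (1 - x / xs) + x / xs = 1 := by ring
      have hcomb : (1 - x / xs) * 0 + (x / xs) * xs = x := by field_simp; ring
      have hintp := hφ.2 (Set.mem_Ici.2 le_rfl) (Set.mem_Ici.2 hxs.le) ha hb hab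
      simp only [smul_eq_mul, hcomb] at hintp
      have hφ0 : (0:ℝ) ≤ φ 0 := le_trans (le_max_left _ _) (hmaj 0 le_rfl)
      have hφxs : xs / (2 * Real.log 2 * (xs + c)) ≤ φ xs := by
        have h1 : (1:ℝ)/2 * Real.logb 2 (xs + c) ≤ φ xs :=
          le_trans (le_max_right _ _) (hmaj xs hxs.le)
        have h2 : (1:ℝ)/2 * Real.logb 2 (xs + c) = xs / (2 * Real.log 2 * (xs + c)) := by
          have hne1 : Real.log 2 ≠ 0 := hL2.ne'
          have hne2 : xs + c ≠ 0 := hS.ne'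
          rw [Real.logb, heq]
          field_simp
        linarith [h2 ▸ h1]
      rw [hlin x hx hx'.le]
      have e : x / (2 * Real.log 2 * (xs + c)) = (x / xs) * (xs / (2 * Real.log 2 * (xs + c))) := by
        field_simp
      rw [e]
      calc (x / xs) * (xs / (2 * Real.log 2 * (xs + c)))
          ≤ (x / xs) * φ xs := mul_le_mul_of_nonneg_left hφxs hb
        _ ≤ (1 - x / xs) * φ 0 + (x / xs) * φ xs := by nlinarith
        _ ≤ φ x := hintp
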